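/- Let (G,Λ) be a pseudo free self-similar k-graph such that g·v = v for all g ∈ G and v ∈ Λ^0, and let T be a maximal tail of Λ. Then the set H_T := {v ∈ T : for all p, q ∈ ℕ^k with p − q ∈ Per_{ΛT} and every μ ∈ vΛ^pT, there exists a unique ν ∈ vΛ^qT such that (μ, 1, ν) is a cycline pair of ΛT} is nonempty and hereditary in ΛT (that is, whenever v ∈ H_T and μ ∈ vΛT then s(μ) ∈ H_T). -/

import Mathlib

/-- A `k`-graph: a countable small category equipped with a degree functor
`d : Λ → ℕ^k` satisfying the unique factorization property.  Objects are
identified with their identity morphisms (the degree-zero paths);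
`comp μ ν` is the composite `μν` (a junk value when `s μ ≠ r ν`). -/
structure KGraph (k : ℕ) where
  Path : Type
  countable : Countable Path
  r : Path → Path
  s : Path → Path
  d : Path → Fin k → ℕ
  comp : Path → Path → Path
  d_r : ∀ μ, d (r μ) = 0
  d_s : ∀ μ, d (s μ) = 0
  r_r : ∀ μ, r (r μ) = r μ
  s_r : ∀ μ, s (r μ) = r μ
  r_s : ∀ μ, r (s μ) = s μ
  s_s : ∀ μ, s (s μ) = s μ
  eq_r_of_d_eq_zero : ∀ μ, d μ = 0 → μ = r μ
  comp_id : ∀ μ, comp μ (s μ) = μ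
  id_comp : ∀ μ, comp (r μ) μ = μ
  r_comp : ∀ μ ν, s μ = r ν → r (comp μ ν) = r μ
  s_comp : ∀ μ ν, s μ = r ν → s (comp μ ν) = s ν
  d_comp : ∀ μ ν, s μ = r ν → d (comp μ ν) = d μ + d ν
  comp_assoc : ∀ μ ν ξ, s μ = r ν → s ν = r ξ →
    comp (comp μ ν) ξ = comp μ (comp ν ξ)
  factor : ∀ μ p q, d μ = p + q →
    ∃! αβ : Path × Path, s αβ.1 = r αβ.2 ∧ d αβ.1 = p ∧ d αβ.2 = q ∧
      comp αβ.1 αβ.2 = μ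

namespace KGraph

variable {k : ℕ} (Λ : KGraph k)

/-- The vertices of a `k`-graph are the degree-zero paths. -/
def IsVertex (v : Λ.Path) : Prop := Λ.d v = 0

/-- `Λ` is row-finite if `|v Λ^p| < ∞` for every vertex `v` and `p ∈ ℕ^k`. -/
def RowFinite : Prop :=
  ∀ v, Λ.IsVertex v → ∀ p : Fin k → ℕ, {μ | Λ.r μ = v ∧ Λ.d μ = p}.Finite

/-- `Λ` is source-free if `v Λ^p ≠ ∅` for every vertex `v` and `p ∈ ℕ^k`. -/
def SourceFree : Prop :=
  ∀ v, Λ.IsVertex v → ∀ p : Fin k → ℕ, ∃ μ, Λ.r μ = v ∧ Λ.d μ = p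

/-- `ΛT`, the set of paths of `Λ` whose source lies in `T`. -/
def tailPaths (T : Set Λ.Path) : Set Λ.Path := {μ | Λ.s μ ∈ T}

/-- `H Λ T`, the set of paths with source in `T` and range in `H`. -/
def cornerPaths (T H : Set Λ.Path) : Set Λ.Path := {μ | Λ.s μ ∈ T ∧ Λ.r μ ∈ H}

end KGraph

/-- A maximal tail of a `k`-graph. -/
structure MaximalTail {k : ℕ} (Λ : KGraph k) (T : Set Λ.Path) : Prop where
  nonempty : T.Nonempty
  vertex : ∀ v ∈ T, Λ.IsVertex v
  backward_closed : ∀ w, Λ.IsVertex w → ∀ v ∈ T, (∃ μ, Λ.r μ = w ∧ Λ.s μ = v) → w ∈ T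
  reaches : ∀ v ∈ T, ∀ p : Fin k → ℕ, ∃ μ, Λ.r μ = v ∧ Λ.d μ = p ∧ Λ.s μ ∈ T
  directed : ∀ v₁ ∈ T, ∀ v₂ ∈ T, ∃ w ∈ T,
    (∃ μ, Λ.r μ = v₁ ∧ Λ.s μ = w) ∧ (∃ ν, Λ.r ν = v₂ ∧ Λ.s ν = w)

/-- An infinite path of a `k`-graph, i.e. a degree-preserving functor
`x : Ω_k → Λ`; here `val p n` records the segment `x(p, p + n)`. -/
structure InfPath {k : ℕ} (Λ : KGraph k) where
  val : (Fin k → ℕ) → (Fin k → ℕ) → Λ.Path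
  d_val : ∀ p n, Λ.d (val p n) = n
  r_val : ∀ p n, Λ.r (val p n) = val p 0
  s_val : ∀ p n, Λ.s (val p n) = val (p + n) 0
  comp_val : ∀ p m n, Λ.comp (val p m) (val (p + m) n) = val p (m + n)

namespace InfPath

variable {k : ℕ} {Λ : KGraph k}

/-- The shift `σ^n x` of an infinite path. -/
def shift (x : InfPath Λ) (n : Fin k → ℕ) : InfPath Λ where
  val p m := x.val (p + n) m
  d_val p m := x.d_val _ _
  r_val p m := x.r_val _ _
  s_val p m := by rw [x.s_val, add_right_comm]
  comp_val p m m' := by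
    show Λ.comp (x.val (p + n) m) (x.val (p + m + n) m') = x.val (p + n) (m + m')
    rw [add_right_comm p m n]; exact x.comp_val (p + n) m m'

/-- An infinite path lies in the subgraph determined by the set of paths `P`
if all of its segments lie in `P`. -/
def inSub (P : Set Λ.Path) (x : InfPath Λ) : Prop := ∀ p n, x.val p n ∈ P

end InfPath

/-- `z = μ x`: `z` is the infinite path obtained by prepending the finite
path `μ` to the infinite path `x` (which requires `s μ = x(0,0)`). -/
def KGraph.IsExtension {k : ℕ} (Λ : KGraph k) (μ : Λ.Path) (x z : InfPath Λ) : Prop :=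
  Λ.s μ = x.val 0 0 ∧ ∀ n, z.val 0 (Λ.d μ + n) = Λ.comp μ (x.val 0 n)

/-- A cycline pair `(μ, 1, ν)` of the subgraph of `Λ` determined by the set of
paths `P`: `s μ = s ν` and `μ x = ν x` for every infinite path `x` of the
subgraph with range `s ν`. -/
def KGraph.IsCyclinePair {k : ℕ} (Λ : KGraph k) (P : Set Λ.Path) (μ ν : Λ.Path) : Prop :=
  μ ∈ P ∧ ν ∈ P ∧ Λ.s μ = Λ.s ν ∧
    ∀ x : InfPath Λ, x.inSub P →
      ∀ z : InfPath Λ, Λ.IsExtension ν x z → Λ.IsExtension μ x z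

/-- `Per_Γ` for the subgraph `Γ` of `Λ` determined by `P`:
the set of all `d μ − d ν` over cycline pairs `(μ, 1, ν)`. -/
def KGraph.PerPair {k : ℕ} (Λ : KGraph k) (P : Set Λ.Path) : Set (Fin k → ℤ) :=
  {m | ∃ μ ν, Λ.IsCyclinePair P μ ν ∧ m = fun i => (Λ.d μ i : ℤ) - (Λ.d ν i : ℤ)}

/-- A self-similar `k`-graph `(G, Λ)`: an action of the countable discrete
group `G` on `Λ` together with a restriction map `(g, μ) ↦ g|_μ`. -/
structure SelfSimilarSys (k : ℕ) (G : Type) [Group G] [Countable G] (Λ : KGraph k) where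
  act : G → Λ.Path → Λ.Path
  res : G → Λ.Path → G
  act_one : ∀ μ, act 1 μ = μ
  act_mul : ∀ g h μ, act (g * h) μ = act g (act h μ)
  d_act : ∀ g μ, Λ.d (act g μ) = Λ.d μ
  s_act : ∀ g μ, Λ.s (act g μ) = act g (Λ.s μ)
  r_act : ∀ g μ, Λ.r (act g μ) = act g (Λ.r μ)
  act_comp : ∀ g μ ν, Λ.s μ = Λ.r ν →
    act g (Λ.comp μ ν) = Λ.comp (act g μ) (act (res g μ) ν)
  res_vertex : ∀ g v, Λ.IsVertex v → res g v = g
  res_comp : ∀ g μ ν, Λ.s μ = Λ.r ν → res g (Λ.comp μ ν) = res (res g μ) ν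
  res_one : ∀ μ, res 1 μ = 1
  res_mul : ∀ g h μ, res (g * h) μ = res g (act h μ) * res h μ

namespace SelfSimilarSys

variable {k : ℕ} {G : Type} [Group G] [Countable G] {Λ : KGraph k}

/-- `(G, Λ)` is pseudo free: `g·μ = μ` and `g|_μ = 1` imply `g = 1`. -/
def PseudoFree (S : SelfSimilarSys k G Λ) : Prop :=
  ∀ g μ, S.act g μ = μ → S.res g μ = 1 → g = 1

/-- `y = g · x` for infinite paths: `y(0, n) = g · x(0, n)` for all `n`. -/
def IsGAct (S : SelfSimilarSys k G Λ) (g : G) (x y : InfPath Λ) : Prop :=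
  ∀ n, y.val 0 n = S.act g (x.val 0 n)

/-- A cycline triple `(μ, g, ν)` of the subgraph of `Λ` determined by `P`:
`s μ = g · s ν` and `μ (g · x) = ν x` for every infinite path `x` of the
subgraph with range `s ν`. -/
def IsCyclineTriple (S : SelfSimilarSys k G Λ) (P : Set Λ.Path)
    (μ : Λ.Path) (g : G) (ν : Λ.Path) : Prop :=
  μ ∈ P ∧ ν ∈ P ∧ Λ.s μ = S.act g (Λ.s ν) ∧
    ∀ x : InfPath Λ, x.inSub P → Λ.s ν = x.val 0 0 →
      ∀ y : InfPath Λ, S.IsGAct g x y →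
        ∀ z : InfPath Λ, Λ.IsExtension ν x z → Λ.IsExtension μ y z

/-- `Per_{G,Γ}` for the subgraph `Γ` of `Λ` determined by `P`:
the set of all `d μ − d ν` over cycline triples `(μ, g, ν)`. -/
def PerTriple (S : SelfSimilarSys k G Λ) (P : Set Λ.Path) : Set (Fin k → ℤ) :=
  {m | ∃ μ g ν, S.IsCyclineTriple P μ g ν ∧ m = fun i => (Λ.d μ i : ℤ) - (Λ.d ν i : ℤ)}

/-- Membership `y ∈ [x]`: `y` is an infinite path of `ΛT` and
`σ^p x = g · σ^q y` for some `p, q ∈ ℕ^k` and `g ∈ G`. -/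
def ClassMem (S : SelfSimilarSys k G Λ) (T : Set Λ.Path) (x y : InfPath Λ) : Prop :=
  y.inSub (Λ.tailPaths T) ∧ ∃ p q : Fin k → ℕ, ∃ g : G, S.IsGAct g (y.shift q) (x.shift p)

end SelfSimilarSys

/-- `H_T`: the vertices `v ∈ T` such that for all `p, q ∈ ℕ^k` with
`p − q ∈ Per_{ΛT}` and every `μ ∈ v Λ^p T` there is a unique `ν ∈ v Λ^q T`
with `(μ, 1, ν)` a cycline pair of `ΛT`. -/
def KGraph.HSet {k : ℕ} (Λ : KGraph k) (T : Set Λ.Path) : Set Λ.Path :=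
  {v | v ∈ T ∧ ∀ p q : Fin k → ℕ,
    (fun i => (p i : ℤ) - (q i : ℤ)) ∈ Λ.PerPair (Λ.tailPaths T) →
      ∀ μ, Λ.r μ = v → Λ.d μ = p → Λ.s μ ∈ T →
        ∃! ν, Λ.r ν = v ∧ Λ.d ν = q ∧ Λ.IsCyclinePair (Λ.tailPaths T) μ ν}

/-! ### Auxiliary development for the proof -/

namespace KGraph

variable {k : ℕ} {Λ : KGraph k}

lemma r_vertex {v : Λ.Path} (h : Λ.IsVertex v) : Λ.r v = v :=
  (Λ.eq_r_of_d_eq_zero v h).symm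

lemma s_vertex {v : Λ.Path} (h : Λ.IsVertex v) : Λ.s v = v := by
  have hv : v = Λ.r v := Λ.eq_r_of_d_eq_zero v h
  calc Λ.s v = Λ.s (Λ.r v) := by rw [← hv]
    _ = Λ.r v := Λ.s_r v
    _ = v := hv.symm

lemma isVertex_r (μ : Λ.Path) : Λ.IsVertex (Λ.r μ) := Λ.d_r μ
lemma isVertex_s (μ : Λ.Path) : Λ.IsVertex (Λ.s μ) := Λ.d_s μ

/-- Uniqueness of factorizations. -/
lemma comp_factor_unique {A B A' B' : Λ.Path}
    (hAB : Λ.s A = Λ.r B) (hAB' : Λ.s A' = Λ.r B')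
    (hdA : Λ.d A = Λ.d A') (hdB : Λ.d B = Λ.d B')
    (hc : Λ.comp A B = Λ.comp A' B') : A = A' ∧ B = B' := by
  obtain ⟨P, hP, hu⟩ := Λ.factor (Λ.comp A B) (Λ.d A) (Λ.d B) (Λ.d_comp A B hAB)
  have h1 := hu (A, B) ⟨hAB, rfl, rfl, rfl⟩
  have h2 := hu (A', B') ⟨hAB', hdA.symm, hdB.symm, hc.symm⟩
  have h3 : (A, B) = (A', B') := h1.trans h2.symm
  exact ⟨congrArg Prod.fst h3, congrArg Prod.snd h3⟩

lemma comp_cancel_left {A B B' : Λ.Path}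
    (hAB : Λ.s A = Λ.r B) (hAB' : Λ.s A = Λ.r B') (hdB : Λ.d B = Λ.d B')
    (hc : Λ.comp A B = Λ.comp A B') : B = B' :=
  (comp_factor_unique hAB hAB' rfl hdB hc).2

/-! ### Segments of a finite path -/

lemma nk_sub_add {a b : Fin k → ℕ} (h : a ≤ b) : a + (b - a) = b := by
  funext i
  have h2 : a i ≤ b i := h i
  show a i + (b i - a i) = b i
  omega

lemma exists_seg (F : Λ.Path) (a b : Fin k → ℕ) (h : a + b ≤ Λ.d F) :
    ∃ S : Λ.Path × Λ.Path × Λ.Path,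
      Λ.comp S.1 (Λ.comp S.2.1 S.2.2) = F ∧ Λ.d S.1 = a ∧ Λ.d S.2.1 = b ∧
      Λ.s S.1 = Λ.r S.2.1 ∧ Λ.s S.2.1 = Λ.r S.2.2 := by
  have ha : a ≤ Λ.d F := le_trans le_self_add h
  have h1 : Λ.d F = a + (Λ.d F - a) := (nk_sub_add ha).symm
  obtain ⟨⟨A, M⟩, ⟨hsr, hdA, hdM, hcomp⟩, -⟩ := Λ.factor F a _ h1
  have hb : b ≤ Λ.d M := by
    rw [hdM]; exact le_tsub_of_add_le_left h
  have h2 : Λ.d M = b + (Λ.d M - b) := (nk_sub_add hb).symm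
  obtain ⟨⟨S, R⟩, ⟨hsr2, hdS, hdR, hcomp2⟩, -⟩ := Λ.factor M b _ h2
  refine ⟨(A, S, R), ?_, hdA, hdS, ?_, hsr2⟩
  · rw [hcomp2]; exact hcomp
  · rw [← (Λ.r_comp S R hsr2), hcomp2]; exact hsr

/-- The segment of `F` starting at position `a` with degree `b`. -/
noncomputable def seg (F : Λ.Path) (a b : Fin k → ℕ) (h : a + b ≤ Λ.d F) : Λ.Path :=
  (exists_seg F a b h).choose.2.1

lemma d_seg (F : Λ.Path) (a b : Fin k → ℕ) (h : a + b ≤ Λ.d F) :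
    Λ.d (seg F a b h) = b := (exists_seg F a b h).choose_spec.2.2.1

/-- Any three-fold decomposition of `F` identifies the middle segment. -/
lemma seg_char {F G₁ S G₂ : Λ.Path} {a b : Fin k → ℕ} (h : a + b ≤ Λ.d F)
    (hc : Λ.comp G₁ (Λ.comp S G₂) = F) (hd1 : Λ.d G₁ = a) (hdS : Λ.d S = b)
    (h1 : Λ.s G₁ = Λ.r S) (h2 : Λ.s S = Λ.r G₂) : seg F a b h = S := by
  obtain ⟨hc', hdA, hdS', hsr1, hsr2⟩ := (exists_seg F a b h).choose_spec
  set A := (exists_seg F a b h).choose.1 with hA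
  set S' := (exists_seg F a b h).choose.2.1 with hS'
  set R := (exists_seg F a b h).choose.2.2 with hR
  have e1 : Λ.s G₁ = Λ.r (Λ.comp S G₂) := by rw [Λ.r_comp S G₂ h2]; exact h1
  have e2 : Λ.s A = Λ.r (Λ.comp S' R) := by rw [Λ.r_comp S' R hsr2]; exact hsr1
  have dd : Λ.d (Λ.comp S G₂) = Λ.d (Λ.comp S' R) := by
    have t1 : Λ.d F = Λ.d G₁ + Λ.d (Λ.comp S G₂) := by
      rw [← hc]; exact Λ.d_comp _ _ e1
    have t2 : Λ.d F = Λ.d A + Λ.d (Λ.comp S' R) := by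
      rw [← hc']; exact Λ.d_comp _ _ e2
    funext i
    have u1 := congrFun t1 i
    have u2 := congrFun t2 i
    have u3 := congrFun hd1 i
    have u4 := congrFun hdA i
    simp only [Pi.add_apply] at *
    omega
  obtain ⟨eA, eM⟩ := comp_factor_unique e1 e2 (hd1.trans hdA.symm) dd (hc.trans hc'.symm)
  have dd2 : Λ.d G₂ = Λ.d R := by
    have t1 := Λ.d_comp S G₂ h2
    have t2 := Λ.d_comp S' R hsr2
    funext i
    have u1 := congrFun t1 i
    have u2 := congrFun t2 i
    have u3 := congrFun (hdS.trans hdS'.symm) i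
    have u4 := congrFun dd i
    rw [t1, t2] at u4
    simp only [Pi.add_apply] at *
    omega
  exact ((comp_factor_unique h2 hsr2 (hdS.trans hdS'.symm) dd2 eM).1).symm

lemma seg_comp {F : Λ.Path} {a b c : Fin k → ℕ}
    (h1 : a + b ≤ Λ.d F) (h2 : (a + b) + c ≤ Λ.d F) (h3 : a + (b + c) ≤ Λ.d F) :
    Λ.comp (seg F a b h1) (seg F (a + b) c h2) = seg F a (b + c) h3 := by
  obtain ⟨hcA, hdA, hdS, hsr1, hsr2⟩ := (exists_seg F a b h1).choose_spec
  set A := (exists_seg F a b h1).choose.1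
  set S := (exists_seg F a b h1).choose.2.1
  set R := (exists_seg F a b h1).choose.2.2
  obtain ⟨hcA', hdA', hdS', hsr1', hsr2'⟩ := (exists_seg F (a+b) c h2).choose_spec
  set A' := (exists_seg F (a+b) c h2).choose.1
  set S' := (exists_seg F (a+b) c h2).choose.2.1
  set R' := (exists_seg F (a+b) c h2).choose.2.2
  -- outer uniqueness at (a+b):  F = (A·S)·R = A'·(S'·R')
  have eAS : Λ.s (Λ.comp A S) = Λ.r R := by rw [Λ.s_comp A S hsr1]; exact hsr2
  have hcAS : Λ.comp (Λ.comp A S) R = F := by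
    rw [Λ.comp_assoc A S R hsr1 hsr2]; exact hcA
  have e2 : Λ.s A' = Λ.r (Λ.comp S' R') := by rw [Λ.r_comp S' R' hsr2']; exact hsr1'
  have hdAS : Λ.d (Λ.comp A S) = a + b := by rw [Λ.d_comp A S hsr1, hdA, hdS]
  have ddR : Λ.d R = Λ.d (Λ.comp S' R') := by
    have t1 : Λ.d F = (a + b) + Λ.d R := by rw [← hcAS, Λ.d_comp _ _ eAS, hdAS]
    have t2 : Λ.d F = (a + b) + Λ.d (Λ.comp S' R') := by
      rw [← hcA', Λ.d_comp _ _ e2, hdA']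
    funext i
    have u1 := congrFun t1 i; have u2 := congrFun t2 i
    simp only [Pi.add_apply] at *
    omega
  obtain ⟨eA, eR⟩ := comp_factor_unique eAS e2 (hdAS.trans hdA'.symm) ddR
    (hcAS.trans hcA'.symm)
  -- now F = A · (S·(S'·R'))  = A · ((S·S')·R')
  have hsSS' : Λ.s S = Λ.r S' := by
    have h' : Λ.s S = Λ.r (Λ.comp S' R') := by rw [← eR]; exact hsr2
    rw [h', Λ.r_comp S' R' hsr2']
  have key : Λ.comp A (Λ.comp (Λ.comp S S') R') = F := by
    rw [Λ.comp_assoc S S' R' hsSS' hsr2']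
    rw [← eR]
    exact hcA
  refine Eq.trans ?_ (seg_char h3 key hdA (by rw [Λ.d_comp S S' hsSS', hdS, hdS'])
    (by rw [Λ.r_comp S S' hsSS']; exact hsr1) (by rw [Λ.s_comp S S' hsSS']; exact hsr2')).symm
  rfl

lemma seg_zero_left (F : Λ.Path) (b : Fin k → ℕ) (h : 0 + b ≤ Λ.d F)
    {G H : Λ.Path} (hc : Λ.comp G H = F) (hd : Λ.d G = b) (hsr : Λ.s G = Λ.r H) :
    seg F 0 b h = G := by
  refine seg_char h ?_ (Λ.d_r G) hd (Λ.s_r G) hsr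
  have e : Λ.comp (Λ.r G) (Λ.comp G H) = Λ.comp G H := by
    rw [← Λ.r_comp G H hsr]; exact Λ.id_comp _
  rw [e, hc]

lemma seg_stab {F E : Λ.Path} {a b : Fin k → ℕ} (h : a + b ≤ Λ.d F)
    (hse : Λ.s F = Λ.r E) (h' : a + b ≤ Λ.d (Λ.comp F E)) :
    seg (Λ.comp F E) a b h' = seg F a b h := by
  obtain ⟨hcA, hdA, hdS, hsr1, hsr2⟩ := (exists_seg F a b h).choose_spec
  set A := (exists_seg F a b h).choose.1
  set S := (exists_seg F a b h).choose.2.1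
  set R := (exists_seg F a b h).choose.2.2
  have hsSR : Λ.s (Λ.comp S R) = Λ.r E := by
    rw [Λ.s_comp S R hsr2, ← hse, ← hcA, Λ.s_comp]
    · rw [Λ.s_comp S R hsr2]
    · rw [Λ.r_comp S R hsr2]; exact hsr1
  have hsRE : Λ.s R = Λ.r E := by
    rw [Λ.s_comp S R hsr2] at hsSR; exact hsSR
  have key : Λ.comp A (Λ.comp S (Λ.comp R E)) = Λ.comp F E := by
    rw [← Λ.comp_assoc S R E hsr2 hsRE, ← Λ.comp_assoc A (Λ.comp S R) E _ hsSR, hcA]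
    rw [Λ.r_comp S R hsr2]; exact hsr1
  have e2 : Λ.s S = Λ.r (Λ.comp R E) := by rw [Λ.r_comp R E hsRE]; exact hsr2
  exact seg_char h' key hdA hdS hsr1 e2

lemma seg_end (F : Λ.Path) (h : Λ.d F + 0 ≤ Λ.d F) : seg F (Λ.d F) 0 h = Λ.s F := by
  have c1 : Λ.comp (Λ.s F) (Λ.s F) = Λ.s F := by
    have := Λ.comp_id (Λ.s F); rw [Λ.s_s] at this; exact this
  refine seg_char h ?_ rfl (Λ.d_s F) ((Λ.r_s F).symm) (by rw [Λ.s_s, Λ.r_s])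
  rw [c1]; exact Λ.comp_id F

lemma r_seg (F : Λ.Path) (a b : Fin k → ℕ) (h : a + b ≤ Λ.d F) (h0 : a + 0 ≤ Λ.d F) :
    Λ.r (seg F a b h) = seg F a 0 h0 := by
  obtain ⟨hcA, hdA, hdS, hsr1, hsr2⟩ := (exists_seg F a b h).choose_spec
  set A := (exists_seg F a b h).choose.1
  set S := (exists_seg F a b h).choose.2.1
  set R := (exists_seg F a b h).choose.2.2
  have key : Λ.comp A (Λ.comp (Λ.r S) (Λ.comp S R)) = F := by
    have : Λ.comp (Λ.r S) (Λ.comp S R) = Λ.comp S R := by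
      have hr : Λ.r (Λ.comp S R) = Λ.r S := Λ.r_comp S R hsr2
      rw [← hr]; exact Λ.id_comp _
    rw [this]; exact hcA
  have hSeq : seg F a b h = S := rfl
  have : seg F a 0 h0 = Λ.r S := by
    refine seg_char h0 key hdA (Λ.d_r S) (by rw [Λ.r_r]; exact hsr1)
      (by rw [Λ.s_r, Λ.r_comp S R hsr2])
  rw [this, hSeq]

lemma s_seg (F : Λ.Path) (a b : Fin k → ℕ) (h : a + b ≤ Λ.d F) (h0 : (a + b) + 0 ≤ Λ.d F) :
    Λ.s (seg F a b h) = seg F (a + b) 0 h0 := by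
  obtain ⟨hcA, hdA, hdS, hsr1, hsr2⟩ := (exists_seg F a b h).choose_spec
  set A := (exists_seg F a b h).choose.1
  set S := (exists_seg F a b h).choose.2.1
  set R := (exists_seg F a b h).choose.2.2
  have hAS : Λ.s A = Λ.r S := hsr1
  have key : Λ.comp (Λ.comp A S) (Λ.comp (Λ.s S) R) = F := by
    have e : Λ.comp (Λ.s S) R = R := by rw [hsr2]; exact Λ.id_comp R
    rw [e, Λ.comp_assoc A S R hsr1 hsr2]; exact hcA
  have hSeq : seg F a b h = S := rfl
  have : seg F (a + b) 0 h0 = Λ.s S := by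
    refine seg_char h0 key (by rw [Λ.d_comp A S hsr1, hdA, hdS]) (Λ.d_s S)
      (by rw [Λ.s_comp A S hsr1, Λ.r_s]) (by rw [Λ.s_s, hsr2])
  rw [this, hSeq]

lemma seg_congr {F F' : Λ.Path} (hFF : F = F') {a b : Fin k → ℕ}
    (h : a + b ≤ Λ.d F) (h' : a + b ≤ Λ.d F') : seg F a b h = seg F' a b h' := by
  subst hFF; rfl

lemma seg_zero_zero (F : Λ.Path) (h : (0 : Fin k → ℕ) + 0 ≤ Λ.d F) :
    seg F 0 0 h = Λ.r F := by
  refine seg_zero_left F 0 h (Λ.id_comp F) (Λ.d_r F) (Λ.s_r F)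

/-! ### Chains of finite paths and the infinite paths they determine -/

structure Chain (Λ : KGraph k) where
  F : ℕ → Λ.Path
  step : ∀ j, ∃ E, Λ.s (F j) = Λ.r E ∧ Λ.comp (F j) E = F (j + 1)
  cof : ∀ p : Fin k → ℕ, ∃ j, p ≤ Λ.d (F j)

namespace Chain

variable (C : Chain Λ)

lemma d_mono : ∀ {i j : ℕ}, i ≤ j → Λ.d (C.F i) ≤ Λ.d (C.F j) := by
  intro i j hij
  induction j, hij using Nat.le_induction with
  | base => exact le_refl _
  | succ j hij ih =>
    obtain ⟨E, hsE, hcE⟩ := C.step j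
    refine le_trans ih ?_
    rw [← hcE, Λ.d_comp _ _ hsE]
    exact le_self_add

lemma seg_stab_chain : ∀ {i j : ℕ}, i ≤ j → ∀ {p n : Fin k → ℕ}
    (hb : p + n ≤ Λ.d (C.F i)) (hb' : p + n ≤ Λ.d (C.F j)),
    seg (C.F j) p n hb' = seg (C.F i) p n hb := by
  intro i j hij
  induction j, hij using Nat.le_induction with
  | base => intro p n hb hb'; rfl
  | succ j hij ih =>
    intro p n hb hb'
    obtain ⟨E, hsE, hcE⟩ := C.step j
    have hbj : p + n ≤ Λ.d (C.F j) := le_trans hb (C.d_mono hij)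
    have hb'' : p + n ≤ Λ.d (Λ.comp (C.F j) E) := by rw [hcE]; exact hb'
    calc seg (C.F (j + 1)) p n hb' = seg (Λ.comp (C.F j) E) p n hb'' :=
          seg_congr hcE.symm _ _
      _ = seg (C.F j) p n hbj := seg_stab hbj hsE hb''
      _ = seg (C.F i) p n hb := ih hb hbj

noncomputable def idx (m : Fin k → ℕ) : ℕ := (C.cof m).choose

lemma idx_spec (m : Fin k → ℕ) : m ≤ Λ.d (C.F (C.idx m)) := (C.cof m).choose_spec

lemma idx_bound {p n : Fin k → ℕ} : p + n ≤ Λ.d (C.F (C.idx (p + n))) := C.idx_spec (p + n)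

noncomputable def rawVal (p n : Fin k → ℕ) : Λ.Path :=
  seg (C.F (C.idx (p + n))) p n C.idx_bound

lemma rawVal_eq (p n : Fin k → ℕ) (j : ℕ) (hb : p + n ≤ Λ.d (C.F j)) :
    C.rawVal p n = seg (C.F j) p n hb := by
  unfold rawVal
  rcases le_total (C.idx (p + n)) j with h | h
  · exact (C.seg_stab_chain h C.idx_bound hb).symm
  · exact C.seg_stab_chain h hb C.idx_bound

noncomputable def path : InfPath Λ where
  val := C.rawVal
  d_val p n := d_seg _ _ _ _
  r_val p n := by
    set j := C.idx (p + n) with hj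
    have hb : p + n ≤ Λ.d (C.F j) := C.idx_bound
    have hb0 : p + 0 ≤ Λ.d (C.F j) := le_trans (by rw [add_zero]; exact le_self_add) hb
    rw [C.rawVal_eq p n j hb, C.rawVal_eq p 0 j hb0]
    exact r_seg _ _ _ _ _
  s_val p n := by
    set j := C.idx (p + n) with hj
    have hb : p + n ≤ Λ.d (C.F j) := C.idx_bound
    have hb0 : (p + n) + 0 ≤ Λ.d (C.F j) := by rw [add_zero]; exact hb
    rw [C.rawVal_eq p n j hb, C.rawVal_eq (p + n) 0 j hb0]
    exact s_seg _ _ _ _ _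
  comp_val p m n := by
    set j := C.idx (p + (m + n)) with hj
    have hb : p + (m + n) ≤ Λ.d (C.F j) := C.idx_bound
    have hb1 : p + m ≤ Λ.d (C.F j) := le_trans (add_le_add (le_refl p) le_self_add) hb
    have hb2 : (p + m) + n ≤ Λ.d (C.F j) := by rw [add_assoc]; exact hb
    rw [C.rawVal_eq p m j hb1, C.rawVal_eq (p + m) n j hb2, C.rawVal_eq p (m + n) j hb]
    exact seg_comp hb1 hb2 hb

lemma path_val_eq {p n : Fin k → ℕ} (j : ℕ) (hb : p + n ≤ Λ.d (C.F j)) :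
    C.path.val p n = seg (C.F j) p n hb := C.rawVal_eq p n j hb

end Chain


lemma seg_congr_idx {F : Λ.Path} {a a' b : Fin k → ℕ} (haa : a = a')
    (h : a + b ≤ Λ.d F) (h' : a' + b ≤ Λ.d F) : seg F a b h = seg F a' b h' := by
  subst haa; rfl

/-- Vertices along a path with source in `T` lie in `T`. -/
lemma seg_vertex_mem {T : Set Λ.Path} (hT : MaximalTail Λ T) {F : Λ.Path}
    (hsF : Λ.s F ∈ T) {a : Fin k → ℕ} (h0 : a + 0 ≤ Λ.d F) :
    seg F a 0 h0 ∈ T := by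
  have ha : a ≤ Λ.d F := by have h1 := h0; rw [add_zero] at h1; exact h1
  have hB : a + (Λ.d F - a) ≤ Λ.d F := le_of_eq (nk_sub_add ha)
  have h0' : (a + (Λ.d F - a)) + 0 ≤ Λ.d F := by rw [add_zero]; exact hB
  have hend : Λ.d F + 0 ≤ Λ.d F := by rw [add_zero]
  have hsB : Λ.s (seg F a (Λ.d F - a) hB) = Λ.s F := by
    rw [s_seg F a _ hB h0', seg_congr_idx (nk_sub_add ha) h0' hend, seg_end F hend]
  have hrB : Λ.r (seg F a (Λ.d F - a) hB) = seg F a 0 h0 := r_seg F a _ hB h0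
  exact hT.backward_closed (seg F a 0 h0) (d_seg _ _ _ _) (Λ.s F) hsF
    ⟨seg F a (Λ.d F - a) hB, hrB, hsB⟩

lemma Chain.path_inSub {T : Set Λ.Path} (hT : MaximalTail Λ T) (C : Chain Λ)
    (hs : ∀ j, Λ.s (C.F j) ∈ T) : C.path.inSub (Λ.tailPaths T) := by
  intro p n
  show Λ.s (C.path.val p n) ∈ T
  rw [C.path.s_val p n]
  have hb : (p + n) + 0 ≤ Λ.d (C.F (C.idx ((p + n) + 0))) := C.idx_bound
  rw [C.path_val_eq _ hb]
  exact seg_vertex_mem hT (hs _) hb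

/-! ### Uniqueness of extensions -/

lemma InfPath.ext' {x y : InfPath Λ} (h : x.val = y.val) : x = y := by
  cases x; cases y; simpa using h

lemma isExtension_unique {μ : Λ.Path} {x z z' : InfPath Λ}
    (hz : Λ.IsExtension μ x z) (hz' : Λ.IsExtension μ x z') : z = z' := by
  have h0 : ∀ m, z.val 0 m = z'.val 0 m := by
    intro m
    have key : z.val 0 (m + Λ.d μ) = z'.val 0 (m + Λ.d μ) := by
      rw [add_comm m (Λ.d μ), hz.2 m, hz'.2 m]
    have e1 := z.comp_val 0 m (Λ.d μ)
    have e2 := z'.comp_val 0 m (Λ.d μ)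
    rw [zero_add] at e1 e2
    have c1 : Λ.s (z.val 0 m) = Λ.r (z.val m (Λ.d μ)) := by
      rw [z.s_val 0 m, z.r_val m (Λ.d μ), zero_add]
    have c2 : Λ.s (z'.val 0 m) = Λ.r (z'.val m (Λ.d μ)) := by
      rw [z'.s_val 0 m, z'.r_val m (Λ.d μ), zero_add]
    have hd1 : Λ.d (z.val 0 m) = Λ.d (z'.val 0 m) := by rw [z.d_val, z'.d_val]
    have hd2 : Λ.d (z.val m (Λ.d μ)) = Λ.d (z'.val m (Λ.d μ)) := by rw [z.d_val, z'.d_val]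
    exact (comp_factor_unique c1 c2 hd1 hd2 (by rw [e1, e2, key])).1
  have hall : ∀ p n, z.val p n = z'.val p n := by
    intro p n
    have e1 := z.comp_val 0 p n
    have e2 := z'.comp_val 0 p n
    rw [zero_add] at e1 e2
    have c1 : Λ.s (z.val 0 p) = Λ.r (z.val p n) := by
      rw [z.s_val 0 p, z.r_val p n, zero_add]
    have c2 : Λ.s (z.val 0 p) = Λ.r (z'.val p n) := by
      rw [h0 p, z'.s_val 0 p, z'.r_val p n, zero_add]
    refine comp_cancel_left c1 c2 (by rw [z.d_val, z'.d_val]) ?_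
    rw [e1, h0 (p + n), ← e2, ← h0 p]
  exact InfPath.ext' (funext fun p => funext fun n => hall p n)

/-! ### Seed infinite paths -/

section Seed

variable {T : Set Λ.Path}

/-- One step into the tail. -/
noncomputable def tailStep (hT : MaximalTail Λ T) {v : Λ.Path} (hv : v ∈ T) :
    {μ : Λ.Path // Λ.r μ = v ∧ Λ.d μ = (fun _ => 1) ∧ Λ.s μ ∈ T} :=
  ⟨(hT.reaches v hv (fun _ => 1)).choose, (hT.reaches v hv (fun _ => 1)).choose_spec⟩

noncomputable def seedF (hT : MaximalTail Λ T) {u : Λ.Path} (hu : u ∈ T) :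
    (j : ℕ) → {P : Λ.Path // Λ.r P = u ∧ Λ.s P ∈ T ∧ Λ.d P = (fun _ => j)}
  | 0 => ⟨u, r_vertex (hT.vertex u hu), by rw [s_vertex (hT.vertex u hu)]; exact hu,
      hT.vertex u hu⟩
  | j + 1 =>
    let prev := seedF hT hu j
    let st := tailStep hT prev.2.2.1
    ⟨Λ.comp prev.1 st.1,
      by rw [Λ.r_comp _ _ st.2.1.symm]; exact prev.2.1,
      by rw [Λ.s_comp _ _ st.2.1.symm]; exact st.2.2.2,
      by rw [Λ.d_comp _ _ st.2.1.symm, prev.2.2.2, st.2.2.1]; funext i; simp⟩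

noncomputable def seedChain (hT : MaximalTail Λ T) {u : Λ.Path} (hu : u ∈ T) : Chain Λ where
  F j := (seedF hT hu j).1
  step j := by
    refine ⟨(tailStep hT (seedF hT hu j).2.2.1).1, (tailStep hT (seedF hT hu j).2.2.1).2.1.symm, ?_⟩
    rfl
  cof p := by
    refine ⟨∑ i, p i, ?_⟩
    rw [(seedF hT hu _).2.2.2]
    intro i
    exact Finset.single_le_sum (f := p) (fun i _ => Nat.zero_le _) (Finset.mem_univ i)

noncomputable def seedPath (hT : MaximalTail Λ T) {u : Λ.Path} (hu : u ∈ T) : InfPath Λ :=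
  (seedChain hT hu).path

lemma seedPath_inSub (hT : MaximalTail Λ T) {u : Λ.Path} (hu : u ∈ T) :
    (seedPath hT hu).inSub (Λ.tailPaths T) :=
  (seedChain hT hu).path_inSub hT (fun j => (seedF hT hu j).2.2.1)

lemma seedPath_zero (hT : MaximalTail Λ T) {u : Λ.Path} (hu : u ∈ T) :
    (seedPath hT hu).val 0 0 = u := by
  have hb : (0 : Fin k → ℕ) + 0 ≤ Λ.d ((seedChain hT hu).F 0) := by
    rw [add_zero]; exact fun i => Nat.zero_le _
  rw [seedPath, (seedChain hT hu).path_val_eq 0 hb, seg_zero_zero _ hb]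
  exact (seedF hT hu 0).2.1

end Seed

/-! ### Prepending a finite path to an infinite path -/

section Prepend

variable {ρ : Λ.Path} {x : InfPath Λ}

lemma r_val_zero (x : InfPath Λ) (n : Fin k → ℕ) : Λ.r (x.val 0 n) = x.val 0 0 := x.r_val 0 n

noncomputable def prependChain (ρ : Λ.Path) (x : InfPath Λ) (hs : Λ.s ρ = x.val 0 0) :
    Chain Λ where
  F j := Λ.comp ρ (x.val 0 (fun _ => j))
  step j := by
    have hcomp : Λ.s ρ = Λ.r (x.val 0 (fun _ => j)) := by rw [r_val_zero]; exact hs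
    have hinner : Λ.s (x.val 0 (fun _ => j)) = Λ.r (x.val (fun _ => j) (fun _ => 1)) := by
      rw [x.s_val 0 (fun _ => j), x.r_val (fun _ => j) (fun _ => 1), zero_add]
    refine ⟨x.val (fun _ => j) (fun _ => 1), ?_, ?_⟩
    · rw [Λ.s_comp _ _ hcomp]; exact hinner
    · rw [Λ.comp_assoc _ _ _ hcomp hinner]
      congr 1
      have e := x.comp_val 0 (fun _ => j) (fun _ => 1)
      rw [zero_add] at e
      rw [e]
      rfl
  cof p := by
    refine ⟨∑ i, p i, ?_⟩
    have hcomp : Λ.s ρ = Λ.r (x.val 0 (fun _ => ∑ i, p i)) := by rw [r_val_zero]; exact hs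
    rw [Λ.d_comp _ _ hcomp, x.d_val]
    intro i
    have h1 : p i ≤ ∑ i, p i :=
      Finset.single_le_sum (f := p) (fun i _ => Nat.zero_le _) (Finset.mem_univ i)
    show p i ≤ Λ.d ρ i + (∑ i, p i)
    omega

noncomputable def prependPath (ρ : Λ.Path) (x : InfPath Λ) (hs : Λ.s ρ = x.val 0 0) :
    InfPath Λ := (prependChain ρ x hs).path

lemma prependPath_val (hs : Λ.s ρ = x.val 0 0) (c : Fin k → ℕ) :
    (prependPath ρ x hs).val 0 (Λ.d ρ + c) = Λ.comp ρ (x.val 0 c) := by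
  set j := ∑ i, c i with hj
  have hcj : c ≤ (fun _ => j : Fin k → ℕ) := by
    intro i
    exact Finset.single_le_sum (f := c) (fun i _ => Nat.zero_le _) (Finset.mem_univ i)
  have hcomp : Λ.s ρ = Λ.r (x.val 0 (fun _ => j)) := by rw [r_val_zero]; exact hs
  have hb : 0 + (Λ.d ρ + c) ≤ Λ.d ((prependChain ρ x hs).F j) := by
    show 0 + (Λ.d ρ + c) ≤ Λ.d (Λ.comp ρ (x.val 0 (fun _ => j)))
    rw [Λ.d_comp _ _ hcomp, x.d_val, zero_add]
    exact add_le_add (le_refl _) hcj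
  rw [prependPath, (prependChain ρ x hs).path_val_eq j hb]
  show seg (Λ.comp ρ (x.val 0 (fun _ => j))) 0 (Λ.d ρ + c) hb = Λ.comp ρ (x.val 0 c)
  have hsc : Λ.s ρ = Λ.r (x.val 0 c) := by rw [r_val_zero]; exact hs
  have hinner : Λ.s (x.val 0 c) = Λ.r (x.val c ((fun _ => j) - c)) := by
    rw [x.s_val 0 c, x.r_val c _, zero_add]
  refine seg_zero_left _ _ hb (H := x.val c ((fun _ => j) - c)) ?_
    (by rw [Λ.d_comp _ _ hsc, x.d_val]) (by rw [Λ.s_comp _ _ hsc]; exact hinner)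
  rw [Λ.comp_assoc _ _ _ hsc hinner]
  congr 1
  have e := x.comp_val 0 c ((fun _ => j) - c)
  rw [zero_add] at e
  rw [e, nk_sub_add hcj]

lemma isExtension_prependPath (hs : Λ.s ρ = x.val 0 0) :
    Λ.IsExtension ρ x (prependPath ρ x hs) :=
  ⟨hs, fun n => prependPath_val hs n⟩

lemma prependPath_inSub {T : Set Λ.Path} (hT : MaximalTail Λ T)
    (hs : Λ.s ρ = x.val 0 0) (hx : x.inSub (Λ.tailPaths T)) :
    (prependPath ρ x hs).inSub (Λ.tailPaths T) := by
  refine (prependChain ρ x hs).path_inSub hT (fun j => ?_)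
  show Λ.s (Λ.comp ρ (x.val 0 (fun _ => j))) ∈ T
  have hcomp : Λ.s ρ = Λ.r (x.val 0 (fun _ => j)) := by rw [r_val_zero]; exact hs
  rw [Λ.s_comp _ _ hcomp]
  exact hx 0 (fun _ => j)

end Prepend

/-! ### Cycline pairs -/

section Cycline

variable {T : Set Λ.Path}

lemma ext_val_d {ν : Λ.Path} {x z : InfPath Λ} (hz : Λ.IsExtension ν x z) :
    z.val 0 (Λ.d ν) = ν := by
  have h := hz.2 0
  rw [add_zero] at h
  rw [h, ← hz.1]
  exact Λ.comp_id ν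

lemma ext_zero {ν : Λ.Path} {x z : InfPath Λ} (hz : Λ.IsExtension ν x z) :
    z.val 0 0 = Λ.r ν := by
  have h := z.r_val 0 (Λ.d ν)
  rw [ext_val_d hz] at h
  exact h.symm

lemma isCyclinePair_refl {μ : Λ.Path} (hμ : μ ∈ Λ.tailPaths T) :
    Λ.IsCyclinePair (Λ.tailPaths T) μ μ :=
  ⟨hμ, hμ, rfl, fun _ _ _ h => h⟩

lemma isCyclinePair_trans {μ ν ξ : Λ.Path}
    (h1 : Λ.IsCyclinePair (Λ.tailPaths T) μ ν) (h2 : Λ.IsCyclinePair (Λ.tailPaths T) ν ξ) :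
    Λ.IsCyclinePair (Λ.tailPaths T) μ ξ :=
  ⟨h1.1, h2.2.1, h1.2.2.1.trans h2.2.2.1,
    fun x hx z hz => h1.2.2.2 x hx z (h2.2.2.2 x hx z hz)⟩

lemma isCyclinePair_symm {μ ν : Λ.Path}
    (hcyc : Λ.IsCyclinePair (Λ.tailPaths T) μ ν) :
    Λ.IsCyclinePair (Λ.tailPaths T) ν μ := by
  obtain ⟨hμ, hν, hsμν, hmain⟩ := hcyc
  refine ⟨hν, hμ, hsμν.symm, ?_⟩
  intro x hx z hz
  have hsν : Λ.s ν = x.val 0 0 := by rw [← hsμν]; exact hz.1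
  have hW : Λ.IsExtension ν x (prependPath ν x hsν) := isExtension_prependPath hsν
  have hWμ : Λ.IsExtension μ x (prependPath ν x hsν) := hmain x hx _ hW
  have heq : prependPath ν x hsν = z := isExtension_unique hWμ hz
  rw [← heq]
  exact hW

lemma cycline_comp_right (hT : MaximalTail Λ T) {α β ρ : Λ.Path}
    (hcyc : Λ.IsCyclinePair (Λ.tailPaths T) α β)
    (hαρ : Λ.s α = Λ.r ρ) (hρs : Λ.s ρ ∈ T) :
    Λ.IsCyclinePair (Λ.tailPaths T) (Λ.comp α ρ) (Λ.comp β ρ) := by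
  obtain ⟨hα, hβ, hsαβ, hmain⟩ := hcyc
  have hβρ : Λ.s β = Λ.r ρ := by rw [← hsαβ]; exact hαρ
  refine ⟨?_, ?_, ?_, ?_⟩
  · show Λ.s (Λ.comp α ρ) ∈ T
    rw [Λ.s_comp _ _ hαρ]; exact hρs
  · show Λ.s (Λ.comp β ρ) ∈ T
    rw [Λ.s_comp _ _ hβρ]; exact hρs
  · rw [Λ.s_comp _ _ hαρ, Λ.s_comp _ _ hβρ]
  · intro x hx z hz
    have hsρx : Λ.s ρ = x.val 0 0 := by
      have h1 := hz.1; rw [Λ.s_comp _ _ hβρ] at h1; exact h1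
    set x' := prependPath ρ x hsρx with hx'def
    have hx'ext : Λ.IsExtension ρ x x' := isExtension_prependPath hsρx
    have hx'in : x'.inSub (Λ.tailPaths T) := prependPath_inSub hT hsρx hx
    have hx'00 : x'.val 0 0 = Λ.r ρ := ext_zero hx'ext
    have hextβ : Λ.IsExtension β x' z := by
      refine ⟨by rw [hx'00]; exact hβρ, fun e => ?_⟩
      have h1 := hz.2 e
      have hidx : Λ.d (Λ.comp β ρ) + e = (Λ.d β + e) + Λ.d ρ := by
        rw [Λ.d_comp _ _ hβρ]; funext i; simp only [Pi.add_apply]; omega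
      rw [hidx] at h1
      have hsρxe : Λ.s ρ = Λ.r (x.val 0 e) := by rw [r_val_zero]; exact hsρx
      have hrw1 : Λ.comp (Λ.comp β ρ) (x.val 0 e) = Λ.comp β (x'.val 0 (Λ.d ρ + e)) := by
        rw [Λ.comp_assoc _ _ _ hβρ hsρxe]
        congr 1
        exact (prependPath_val hsρx e).symm
      have hsplit : x'.val 0 (Λ.d ρ + e) = Λ.comp (x'.val 0 e) (x'.val e (Λ.d ρ)) := by
        have e2 := x'.comp_val 0 e (Λ.d ρ)
        rw [zero_add] at e2
        rw [add_comm (Λ.d ρ) e]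
        exact e2.symm
      have hcondβ : Λ.s β = Λ.r (x'.val 0 e) := by rw [r_val_zero, hx'00]; exact hβρ
      have hcond2 : Λ.s (x'.val 0 e) = Λ.r (x'.val e (Λ.d ρ)) := by
        rw [x'.s_val 0 e, x'.r_val e _, zero_add]
      have h2 : z.val 0 ((Λ.d β + e) + Λ.d ρ) =
          Λ.comp (Λ.comp β (x'.val 0 e)) (x'.val e (Λ.d ρ)) := by
        rw [h1, hrw1, hsplit, ← Λ.comp_assoc _ _ _ hcondβ hcond2]
      have h3 := z.comp_val 0 (Λ.d β + e) (Λ.d ρ)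
      rw [zero_add] at h3
      have c1 : Λ.s (z.val 0 (Λ.d β + e)) = Λ.r (z.val (Λ.d β + e) (Λ.d ρ)) := by
        rw [z.s_val, z.r_val, zero_add]
      have c2 : Λ.s (Λ.comp β (x'.val 0 e)) = Λ.r (x'.val e (Λ.d ρ)) := by
        rw [Λ.s_comp _ _ hcondβ]; exact hcond2
      refine (comp_factor_unique c1 c2 ?_ ?_ ?_).1
      · rw [z.d_val, Λ.d_comp _ _ hcondβ, x'.d_val]
      · rw [z.d_val, x'.d_val]
      · rw [h3]; exact h2
    have hextα := hmain x' hx'in z hextβ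
    refine ⟨by rw [Λ.s_comp _ _ hαρ]; exact hsρx, fun c => ?_⟩
    have h1 := hextα.2 (Λ.d ρ + c)
    have hidx : Λ.d (Λ.comp α ρ) + c = Λ.d α + (Λ.d ρ + c) := by
      rw [Λ.d_comp _ _ hαρ, add_assoc]
    rw [hidx, h1, prependPath_val hsρx c,
      ← Λ.comp_assoc _ _ _ hαρ (by rw [r_val_zero]; exact hsρx)]

lemma cycline_comp_left {μ ν ρ : Λ.Path}
    (hcyc : Λ.IsCyclinePair (Λ.tailPaths T) μ ν)
    (hρμ : Λ.s ρ = Λ.r μ) (hρν : Λ.s ρ = Λ.r ν) :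
    Λ.IsCyclinePair (Λ.tailPaths T) (Λ.comp ρ μ) (Λ.comp ρ ν) := by
  obtain ⟨hμ, hν, hsμν, hmain⟩ := hcyc
  refine ⟨?_, ?_, ?_, ?_⟩
  · show Λ.s (Λ.comp ρ μ) ∈ T
    rw [Λ.s_comp _ _ hρμ]; exact hμ
  · show Λ.s (Λ.comp ρ ν) ∈ T
    rw [Λ.s_comp _ _ hρν]; exact hν
  · rw [Λ.s_comp _ _ hρμ, Λ.s_comp _ _ hρν]; exact hsμν
  · intro x hx z hz
    have hsν : Λ.s ν = x.val 0 0 := by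
      have h1 := hz.1; rw [Λ.s_comp _ _ hρν] at h1; exact h1
    set z₁ := prependPath ν x hsν with hz₁def
    have hz₁ : Λ.IsExtension ν x z₁ := isExtension_prependPath hsν
    have hz₁μ : Λ.IsExtension μ x z₁ := hmain x hx z₁ hz₁
    have hsρz : Λ.s ρ = z₁.val 0 0 := by rw [ext_zero hz₁]; exact hρν
    set W := prependPath ρ z₁ hsρz with hWdef
    have hWν : Λ.IsExtension (Λ.comp ρ ν) x W := by
      refine ⟨by rw [Λ.s_comp _ _ hρν]; exact hsν, fun c => ?_⟩
      have hidx : Λ.d (Λ.comp ρ ν) + c = Λ.d ρ + (Λ.d ν + c) := by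
        rw [Λ.d_comp _ _ hρν, add_assoc]
      have hcond : Λ.s ν = Λ.r (x.val 0 c) := by rw [r_val_zero]; exact hsν
      rw [hidx, prependPath_val hsρz (Λ.d ν + c), hz₁.2 c,
        ← Λ.comp_assoc _ _ _ hρν hcond]
    have hWz : W = z := isExtension_unique hWν hz
    refine ⟨by rw [Λ.s_comp _ _ hρμ, hsμν]; exact hsν, fun c => ?_⟩
    rw [← hWz]
    have hidx : Λ.d (Λ.comp ρ μ) + c = Λ.d ρ + (Λ.d μ + c) := by
      rw [Λ.d_comp _ _ hρμ, add_assoc]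
    have hcond : Λ.s μ = Λ.r (x.val 0 c) := by rw [r_val_zero, ← hsμν] at *; rw [hsμν]; exact hsν
    rw [hidx, prependPath_val hsρz (Λ.d μ + c), hz₁μ.2 c,
      ← Λ.comp_assoc _ _ _ hρμ hcond]

lemma partner_unique (hT : MaximalTail Λ T) {μ ν₁ ν₂ : Λ.Path}
    (h1 : Λ.IsCyclinePair (Λ.tailPaths T) μ ν₁)
    (h2 : Λ.IsCyclinePair (Λ.tailPaths T) μ ν₂)
    (hd : Λ.d ν₁ = Λ.d ν₂) : ν₁ = ν₂ := by
  have hu : Λ.s μ ∈ T := h1.1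
  set x := seedPath hT hu with hxdef
  have hx : x.inSub (Λ.tailPaths T) := seedPath_inSub hT hu
  have hs1 : Λ.s ν₁ = x.val 0 0 := by
    rw [hxdef, seedPath_zero hT hu]; exact h1.2.2.1.symm
  have hs2 : Λ.s ν₂ = x.val 0 0 := by
    rw [hxdef, seedPath_zero hT hu]; exact h2.2.2.1.symm
  have e1 : Λ.IsExtension ν₁ x (prependPath ν₁ x hs1) := isExtension_prependPath hs1
  have e2 : Λ.IsExtension ν₂ x (prependPath ν₂ x hs2) := isExtension_prependPath hs2
  have m1 : Λ.IsExtension μ x (prependPath ν₁ x hs1) := h1.2.2.2 x hx _ e1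
  have m2 : Λ.IsExtension μ x (prependPath ν₂ x hs2) := h2.2.2.2 x hx _ e2
  have hzz : prependPath ν₁ x hs1 = prependPath ν₂ x hs2 := isExtension_unique m1 m2
  calc ν₁ = (prependPath ν₁ x hs1).val 0 (Λ.d ν₁) := (ext_val_d e1).symm
    _ = (prependPath ν₂ x hs2).val 0 (Λ.d ν₂) := by rw [hzz, hd]
    _ = ν₂ := ext_val_d e2

/-- The key construction: a cycline-pair witness upstream of `r μ` produces a
partner for `μ` of any degree `q` compatible with the witness's period. -/
lemma partner_exists (hT : MaximalTail Λ T) {α β lam μ : Λ.Path} {p q : Fin k → ℕ}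
    (hcyc : Λ.IsCyclinePair (Λ.tailPaths T) α β)
    (hlr : Λ.r lam = Λ.s α) (hls : Λ.s lam = Λ.r μ)
    (hdμ : Λ.d μ = p) (hsμ : Λ.s μ ∈ T)
    (hpq : Λ.d α + q = Λ.d β + p) :
    ∃ ν, Λ.r ν = Λ.r μ ∧ Λ.d ν = q ∧ Λ.IsCyclinePair (Λ.tailPaths T) μ ν := by
  have hαl : Λ.s α = Λ.r lam := hlr.symm
  set ρ := Λ.comp lam μ with hρdef
  have hαρ : Λ.s α = Λ.r ρ := by rw [hρdef, Λ.r_comp _ _ hls]; exact hαl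
  have hβρ : Λ.s β = Λ.r ρ := by rw [← hcyc.2.2.1]; exact hαρ
  have hρs : Λ.s ρ ∈ T := by rw [hρdef, Λ.s_comp _ _ hls]; exact hsμ
  have hAB := cycline_comp_right hT hcyc hαρ hρs
  set A := Λ.comp α ρ with hAdef
  set B := Λ.comp β ρ with hBdef
  have hdB : Λ.d B = (Λ.d α + Λ.d lam) + q := by
    rw [hBdef, Λ.d_comp _ _ hβρ, hρdef, Λ.d_comp _ _ hls, hdμ]
    funext i
    have h1 := congrFun hpq i
    simp only [Pi.add_apply] at *
    omega
  obtain ⟨⟨ν', ν⟩, ⟨hsν'ν, hdν', hdν, hcν⟩, -⟩ := Λ.factor B (Λ.d α + Λ.d lam) q hdB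
  simp only at hsν'ν hdν' hdν hcν
  have hsBμ : Λ.s B = Λ.s μ := by
    rw [hBdef, Λ.s_comp _ _ hβρ, hρdef, Λ.s_comp _ _ hls]
  have hsν : Λ.s ν = Λ.s μ := by
    have h1 : Λ.s (Λ.comp ν' ν) = Λ.s μ := by rw [hcν]; exact hsBμ
    rw [Λ.s_comp _ _ hsν'ν] at h1
    exact h1
  have hsBν : Λ.s B = Λ.s ν := by rw [hsBμ, hsν]
  -- the main derivation
  have key : ∀ x : InfPath Λ, x.inSub (Λ.tailPaths T) → ∀ z, Λ.IsExtension ν x z →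
      (Λ.IsExtension μ x z ∧ ν' = Λ.comp α lam) := by
    intro x hx z hz
    have hsμx : Λ.s μ = x.val 0 0 := by rw [← hsν]; exact hz.1
    have hsν'z : Λ.s ν' = z.val 0 0 := by rw [ext_zero hz]; exact hsν'ν
    set W := prependPath ν' z hsν'z with hWdef
    have hWB : Λ.IsExtension B x W := by
      refine ⟨by rw [hsBν]; exact hz.1, fun c => ?_⟩
      have hidx : Λ.d B + c = Λ.d ν' + (Λ.d ν + c) := by
        rw [← hcν, Λ.d_comp _ _ hsν'ν, add_assoc]
      have hcond : Λ.s ν = Λ.r (x.val 0 c) := by rw [r_val_zero]; exact hz.1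
      rw [hidx, prependPath_val hsν'z (Λ.d ν + c), hz.2 c,
        ← Λ.comp_assoc _ _ _ hsν'ν hcond, hcν]
    have hWA : Λ.IsExtension A x W := hAB.2.2.2 x hx W hWB
    have main : ∀ c, Λ.comp ν' (z.val 0 (p + c)) =
        Λ.comp (Λ.comp α lam) (Λ.comp μ (x.val 0 c)) := by
      intro c
      have h1 := hWA.2 c
      have hidx : Λ.d A + c = Λ.d ν' + (p + c) := by
        rw [hAdef, Λ.d_comp _ _ hαρ, hρdef, Λ.d_comp _ _ hls, hdμ, hdν']
        funext i; simp only [Pi.add_apply]; omega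
      rw [hidx, prependPath_val hsν'z (p + c)] at h1
      rw [h1]
      have e1 : A = Λ.comp (Λ.comp α lam) μ := by
        rw [hAdef, hρdef, Λ.comp_assoc _ _ _ hαl hls]
      have cond1 : Λ.s (Λ.comp α lam) = Λ.r μ := by rw [Λ.s_comp _ _ hαl]; exact hls
      have cond2 : Λ.s μ = Λ.r (x.val 0 c) := by rw [r_val_zero]; exact hsμx
      rw [e1, Λ.comp_assoc _ _ _ cond1 cond2]
    have split : ∀ c, ν' = Λ.comp α lam ∧ z.val 0 (p + c) = Λ.comp μ (x.val 0 c) := by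
      intro c
      have cond2 : Λ.s μ = Λ.r (x.val 0 c) := by rw [r_val_zero]; exact hsμx
      have c1 : Λ.s ν' = Λ.r (z.val 0 (p + c)) := by
        rw [r_val_zero, ext_zero hz]; exact hsν'ν
      have c2 : Λ.s (Λ.comp α lam) = Λ.r (Λ.comp μ (x.val 0 c)) := by
        rw [Λ.s_comp _ _ hαl, Λ.r_comp _ _ cond2]; exact hls
      have d1 : Λ.d ν' = Λ.d (Λ.comp α lam) := by
        rw [hdν', Λ.d_comp _ _ hαl]
      have d2 : Λ.d (z.val 0 (p + c)) = Λ.d (Λ.comp μ (x.val 0 c)) := by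
        rw [z.d_val, Λ.d_comp _ _ cond2, hdμ, x.d_val]
      exact comp_factor_unique c1 c2 d1 d2 (main c)
    refine ⟨⟨hsμx, fun n => ?_⟩, (split 0).1⟩
    rw [hdμ]
    exact (split n).2
  -- memberships and conclusion
  have hνmem : ν ∈ Λ.tailPaths T := by show Λ.s ν ∈ T; rw [hsν]; exact hsμ
  have hcycμν : Λ.IsCyclinePair (Λ.tailPaths T) μ ν :=
    ⟨hsμ, hνmem, hsν.symm, fun x hx z hz => (key x hx z hz).1⟩
  -- r ν = r μ via a seed path
  have hx0 : (seedPath hT hsμ).inSub (Λ.tailPaths T) := seedPath_inSub hT hsμ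
  have hs0 : Λ.s ν = (seedPath hT hsμ).val 0 0 := by
    rw [seedPath_zero hT hsμ]; exact hsν
  have hext0 : Λ.IsExtension ν _ (prependPath ν (seedPath hT hsμ) hs0) :=
    isExtension_prependPath hs0
  have hν'eq : ν' = Λ.comp α lam := (key _ hx0 _ hext0).2
  have hrν : Λ.r ν = Λ.r μ := by
    have h1 : Λ.r ν = Λ.s ν' := hsν'ν.symm
    rw [h1, hν'eq, Λ.s_comp _ _ hαl, hls]
  exact ⟨ν, hrν, hdν, hcycμν⟩

end Cycline

/-! ### The set `Per` is closed under group operations -/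

section PerGroup

variable {T : Set Λ.Path}

lemma perPair_neg {g : Fin k → ℤ} (hg : g ∈ Λ.PerPair (Λ.tailPaths T)) :
    -g ∈ Λ.PerPair (Λ.tailPaths T) := by
  obtain ⟨μ, ν, hcyc, hgeq⟩ := hg
  refine ⟨ν, μ, isCyclinePair_symm hcyc, ?_⟩
  rw [hgeq]; funext i; simp only [Pi.neg_apply]; ring

lemma perPair_add (hT : MaximalTail Λ T) {g g' : Fin k → ℤ}
    (hg : g ∈ Λ.PerPair (Λ.tailPaths T)) (hg' : g' ∈ Λ.PerPair (Λ.tailPaths T)) :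
    g + g' ∈ Λ.PerPair (Λ.tailPaths T) := by
  obtain ⟨α, β, hαβ, hgeq⟩ := hg
  obtain ⟨α', β', hαβ', hg'eq⟩ := hg'
  have hsα : Λ.s α ∈ T := hαβ.1
  have hsα' : Λ.s α' ∈ T := hαβ'.1
  obtain ⟨w, hw, ⟨lam, hlamr, hlams⟩, ⟨lam', hlam'r, hlam's⟩⟩ := hT.directed _ hsα _ hsα'
  obtain ⟨μ', hμ'r, hμ'd, hμ's⟩ := hT.reaches w hw (Λ.d α')
  obtain ⟨ν', hν'r, hν'd, hcycμν⟩ := partner_exists (q := Λ.d β') hT hαβ' hlam'r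
    (by rw [hlam's, hμ'r]) rfl hμ's (by rw [hμ'd, add_comm])
  have hαlam : Λ.s α = Λ.r lam := hlamr.symm
  have hlamμ' : Λ.s lam = Λ.r μ' := by rw [hlams, hμ'r]
  set ρ := Λ.comp lam μ' with hρdef
  have c1 : Λ.s α = Λ.r ρ := by rw [hρdef, Λ.r_comp _ _ hlamμ']; exact hαlam
  have hρs : Λ.s ρ ∈ T := by rw [hρdef, Λ.s_comp _ _ hlamμ']; exact hμ's
  have pair1 := cycline_comp_right hT hαβ c1 hρs
  have hβlam : Λ.s β = Λ.r lam := by rw [← hαβ.2.2.1]; exact hαlam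
  set σ := Λ.comp β lam with hσdef
  have hσμ' : Λ.s σ = Λ.r μ' := by rw [hσdef, Λ.s_comp _ _ hβlam]; exact hlamμ'
  have hσν' : Λ.s σ = Λ.r ν' := by rw [hν'r]; exact hσμ'
  have pair2 := cycline_comp_left hcycμν hσμ' hσν'
  have hmid : Λ.comp β ρ = Λ.comp σ μ' := by
    rw [hρdef, hσdef, Λ.comp_assoc _ _ _ hβlam hlamμ']
  have pair2' : Λ.IsCyclinePair (Λ.tailPaths T) (Λ.comp β ρ) (Λ.comp σ ν') := by
    rw [hmid]; exact pair2
  have pairSum := isCyclinePair_trans pair1 pair2'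
  refine ⟨Λ.comp α ρ, Λ.comp σ ν', pairSum, ?_⟩
  have hβρ : Λ.s β = Λ.r ρ := by rw [← hαβ.2.2.1]; exact c1
  have e1 : Λ.d (Λ.comp α ρ) = Λ.d α + (Λ.d lam + Λ.d μ') := by
    rw [Λ.d_comp _ _ c1, hρdef, Λ.d_comp _ _ hlamμ']
  have e2 : Λ.d (Λ.comp σ ν') = (Λ.d β + Λ.d lam) + Λ.d ν' := by
    rw [Λ.d_comp _ _ hσν', hσdef, Λ.d_comp _ _ hβlam]
  funext i
  have hgi := congrFun hgeq i
  have hg'i := congrFun hg'eq i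
  have hμ'i := congrFun hμ'd i
  have hν'i := congrFun hν'd i
  have he1 := congrFun e1 i
  have he2 := congrFun e2 i
  simp only [Pi.add_apply] at *
  rw [he1, he2]
  push_cast
  omega

end PerGroup

/-! ### Minimal elements of a set of periods (Dickson's lemma) -/

section Min

/-- `g'` lies in the "sign-box" below `g`. -/
def BoxLe (g' g : Fin k → ℤ) : Prop :=
  ∀ i, (g' i).toNat ≤ (g i).toNat ∧ (-(g' i)).toNat ≤ (-(g i)).toNat

variable (Per : Set (Fin k → ℤ))

/-- The box-minimal nonzero elements. -/
def MinSet : Set (Fin k → ℤ) :=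
  {g | g ∈ Per ∧ g ≠ 0 ∧ ∀ g' ∈ Per, g' ≠ 0 → BoxLe g' g → g' = g}

/-- The embedding into `ℕ^{2k}` used for Dickson's lemma. -/
noncomputable def toPos (g : Fin k → ℤ) : (Fin k ⊕ Fin k) →₀ ℕ :=
  Finsupp.equivFunOnFinite.symm (Sum.elim (fun i => (g i).toNat) (fun i => (-(g i)).toNat))

lemma toPos_le {g' g : Fin k → ℤ} : toPos g' ≤ toPos g ↔ BoxLe g' g := by
  rw [Finsupp.le_def]
  constructor
  · intro h i
    have h1 := h (Sum.inl i)
    have h2 := h (Sum.inr i)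
    simp only [toPos, Finsupp.coe_equivFunOnFinite_symm, Sum.elim_inl,
      Sum.elim_inr] at h1 h2
    exact ⟨h1, h2⟩
  · intro h j
    rcases j with i | i <;>
      simp only [toPos, Finsupp.coe_equivFunOnFinite_symm, Sum.elim_inl, Sum.elim_inr]
    · exact (h i).1
    · exact (h i).2

lemma toPos_injective : Function.Injective (toPos (k := k)) := by
  intro g g' h
  funext i
  have h1 := DFunLike.congr_fun h (Sum.inl i)
  have h2 := DFunLike.congr_fun h (Sum.inr i)
  simp only [toPos, Finsupp.coe_equivFunOnFinite_symm, Sum.elim_inl,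
    Sum.elim_inr] at h1 h2
  omega

lemma minSet_finite : (MinSet Per).Finite := by
  have himg : (toPos '' MinSet Per).Finite := by
    by_contra hinf
    have hpwo : (toPos '' MinSet Per).IsPWO := Set.isPWO_of_wellQuasiOrderedLE _
    obtain f := Set.Infinite.natEmbedding _ (hinf : (toPos '' MinSet Per).Infinite)
    obtain ⟨m, n, hmn, hle⟩ := hpwo (fun n => f n)
    obtain ⟨g₁, hg₁, he₁⟩ := (f m).2
    obtain ⟨g₂, hg₂, he₂⟩ := (f n).2
    have hb : BoxLe g₁ g₂ := by
      rw [← toPos_le]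
      rw [he₁, he₂]
      exact hle
    have hgg : g₁ = g₂ := hg₂.2.2 g₁ hg₁.1 hg₁.2.1 hb
    exact hmn.ne (f.injective (Subtype.ext (by rw [← he₁, ← he₂, hgg])))
  have := Set.Finite.of_finite_image himg (toPos_injective.injOn)
  exact this

lemma exists_minSet_le :
    ∀ N (g : Fin k → ℤ), (∑ i, (g i).natAbs) ≤ N → g ∈ Per → g ≠ 0 →
      ∃ h ∈ MinSet Per, BoxLe h g := by
  intro N
  induction N with
  | zero =>
    intro g hsig hg hne
    exfalso
    apply hne
    funext i
    have hle : (g i).natAbs ≤ ∑ i, (g i).natAbs :=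
      Finset.single_le_sum (f := fun i => (g i).natAbs) (fun i _ => Nat.zero_le _)
        (Finset.mem_univ i)
    have : (g i).natAbs = 0 := by omega
    simpa using this
  | succ N ih =>
    intro g hsig hg hne
    by_cases hmin : ∀ g' ∈ Per, g' ≠ 0 → BoxLe g' g → g' = g
    · exact ⟨g, ⟨hg, hne, hmin⟩, fun i => ⟨le_refl _, le_refl _⟩⟩
    · push_neg at hmin
      obtain ⟨g', hg', hne', hble, hneq⟩ := hmin
      have hpt : ∀ i, (g' i).natAbs ≤ (g i).natAbs := by
        intro i; have hb := hble i; omega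
      have hex : ∃ i, (g' i).natAbs < (g i).natAbs := by
        by_contra hc
        push_neg at hc
        apply hneq
        funext i
        have h1 := hble i
        have h2 := hc i
        omega
      obtain ⟨i0, hi0⟩ := hex
      have hlt : (∑ i, (g' i).natAbs) < ∑ i, (g i).natAbs :=
        Finset.sum_lt_sum (fun i _ => hpt i) ⟨i0, Finset.mem_univ _, hi0⟩
      obtain ⟨h, hmem, hble'⟩ := ih g' (by omega) hg' hne'
      exact ⟨h, hmem, fun i => by
        have h1 := hble' i
        have h2 := hble i
        exact ⟨le_trans h1.1 h2.1, le_trans h1.2 h2.2⟩⟩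

end Min

/-! ### A vertex receiving witnesses for all minimal periods -/

section Good

variable {T : Set Λ.Path}

lemma exists_witness_vertex (hT : MaximalTail Λ T) {S : Set (Fin k → ℤ)}
    (hfin : S.Finite) (hsub : S ⊆ Λ.PerPair (Λ.tailPaths T)) :
    ∃ v ∈ T, ∀ h ∈ S, ∃ α β lam, Λ.IsCyclinePair (Λ.tailPaths T) α β ∧
      (fun i => (Λ.d α i : ℤ) - Λ.d β i) = h ∧ Λ.r lam = Λ.s α ∧ Λ.s lam = v := by
  revert hsub
  refine Set.Finite.induction_on (motive := fun S _ => S ⊆ Λ.PerPair (Λ.tailPaths T) →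
    ∃ v ∈ T, ∀ h ∈ S, ∃ α β lam, Λ.IsCyclinePair (Λ.tailPaths T) α β ∧
      (fun i => (Λ.d α i : ℤ) - Λ.d β i) = h ∧ Λ.r lam = Λ.s α ∧ Λ.s lam = v)
    S hfin ?_ ?_
  · intro _
    obtain ⟨v, hv⟩ := hT.nonempty
    exact ⟨v, hv, fun h hh => absurd hh (Set.notMem_empty h)⟩
  · rintro a s ha hs ih hsub
    obtain ⟨v, hv, hwit⟩ := ih (fun x hx => hsub (Set.mem_insert_of_mem a hx))
    obtain ⟨αa, βa, hcyca, hda⟩ := hsub (Set.mem_insert a s)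
    have hsαa : Λ.s αa ∈ T := hcyca.1
    obtain ⟨w, hw, ⟨πa, hπar, hπas⟩, ⟨πv, hπvr, hπvs⟩⟩ := hT.directed _ hsαa v hv
    refine ⟨w, hw, fun h hh => ?_⟩
    rcases Set.mem_insert_iff.mp hh with rfl | hh'
    · exact ⟨αa, βa, πa, hcyca, hda.symm, hπar, hπas⟩
    · obtain ⟨α, β, lam, hcyc, hd, hlr, hls⟩ := hwit h hh'
      have hcc : Λ.s lam = Λ.r πv := by rw [hls, hπvr]
      exact ⟨α, β, Λ.comp lam πv, hcyc, hd, by rw [Λ.r_comp _ _ hcc]; exact hlr,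
        by rw [Λ.s_comp _ _ hcc]; exact hπvs⟩

/-- Realization of all pairs `(p, q)` with `p - q ∈ Per` at a good vertex. -/
lemma realize (hT : MaximalTail Λ T) {v : Λ.Path}
    (hwit : ∀ h ∈ MinSet (Λ.PerPair (Λ.tailPaths T)),
      ∃ α β lam, Λ.IsCyclinePair (Λ.tailPaths T) α β ∧
        (fun i => (Λ.d α i : ℤ) - Λ.d β i) = h ∧ Λ.r lam = Λ.s α ∧ Λ.s lam = v) :
    ∀ N (p q : Fin k → ℕ) (μ : Λ.Path), (∑ i, ((p i : ℤ) - q i).natAbs) ≤ N →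
      ((fun i => (p i : ℤ) - q i) ∈ Λ.PerPair (Λ.tailPaths T)) →
      Λ.r μ = v → Λ.d μ = p → Λ.s μ ∈ T →
      ∃ ν, Λ.r ν = v ∧ Λ.d ν = q ∧ Λ.IsCyclinePair (Λ.tailPaths T) μ ν := by
  intro N
  induction N with
  | zero =>
    intro p q μ hsig hper hr hd hs
    have hpq : p = q := by
      funext i
      have hle : ((p i : ℤ) - q i).natAbs ≤ ∑ i, ((p i : ℤ) - q i).natAbs :=
        Finset.single_le_sum (f := fun i => ((p i : ℤ) - q i).natAbs)
          (fun i _ => Nat.zero_le _) (Finset.mem_univ i)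
      omega
    exact ⟨μ, hr, by rw [hd, hpq], isCyclinePair_refl hs⟩
  | succ N ih =>
    intro p q μ hsig hper hr hd hs
    by_cases hg0 : (fun i => (p i : ℤ) - q i) = (0 : Fin k → ℤ)
    · have hpq : p = q := by
        funext i
        have := congrFun hg0 i
        simp only [Pi.zero_apply] at this
        omega
      exact ⟨μ, hr, by rw [hd, hpq], isCyclinePair_refl hs⟩
    · obtain ⟨h, hmem, hble⟩ := exists_minSet_le (Λ.PerPair (Λ.tailPaths T))
        (∑ i, ((p i : ℤ) - q i).natAbs) _ (le_refl _) hper hg0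
      obtain ⟨α, β, lam, hcycw, hdiff, hlr, hls⟩ := hwit h hmem
      have htnn : ∀ i, (0 : ℤ) ≤ (p i : ℤ) - h i := by
        intro i
        have hb : (h i).toNat ≤ ((p i : ℤ) - q i).toNat ∧
            (-(h i)).toNat ≤ (-((p i : ℤ) - q i)).toNat := hble i
        omega
      set t : Fin k → ℕ := fun i => ((p i : ℤ) - h i).toNat with htdef
      have htZ : ∀ i, (t i : ℤ) = (p i : ℤ) - h i := by
        intro i
        simp only [htdef]
        exact Int.toNat_of_nonneg (htnn i)
      have hpq1 : Λ.d α + t = Λ.d β + p := by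
        funext i
        simp only [Pi.add_apply]
        have hdi := congrFun hdiff i
        have hti := htZ i
        omega
      obtain ⟨ν₁, hν₁r, hν₁d, hcyc₁⟩ := partner_exists hT hcycw hlr
        (by rw [hls, hr]) hd hs hpq1
      have hh : h ∈ Λ.PerPair (Λ.tailPaths T) := hmem.1
      have hg2 : (fun i => (t i : ℤ) - q i) ∈ Λ.PerPair (Λ.tailPaths T) := by
        have hsum := perPair_add hT hper (perPair_neg hh)
        have heq : (fun i => (t i : ℤ) - q i) =
            (fun i => (p i : ℤ) - q i) + -h := by
          funext i
          simp only [Pi.add_apply, Pi.neg_apply]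
          have := htZ i
          omega
        rw [heq]
        exact hsum
      have hsig2 : (∑ i, ((t i : ℤ) - q i).natAbs) ≤ N := by
        have hdec : ∀ i, ((t i : ℤ) - q i).natAbs + (h i).natAbs =
            ((p i : ℤ) - q i).natAbs := by
          intro i
          have hb : (h i).toNat ≤ ((p i : ℤ) - q i).toNat ∧
              (-(h i)).toNat ≤ (-((p i : ℤ) - q i)).toNat := hble i
          have hti := htZ i
          omega
        have hsum : (∑ i, (((t i : ℤ) - q i).natAbs + (h i).natAbs)) =
            ∑ i, ((p i : ℤ) - q i).natAbs := Finset.sum_congr rfl (fun i _ => hdec i)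
        rw [Finset.sum_add_distrib] at hsum
        have hpos : 1 ≤ ∑ i, (h i).natAbs := by
          have hne := hmem.2.1
          have : ∃ i, h i ≠ 0 := by
            by_contra hc
            push_neg at hc
            exact hne (funext fun i => hc i)
          obtain ⟨i0, hi0⟩ := this
          have h1 : 1 ≤ (h i0).natAbs := by omega
          exact le_trans h1 (Finset.single_le_sum (f := fun i => (h i).natAbs)
            (fun i _ => Nat.zero_le _) (Finset.mem_univ i0))
        omega
      have hsν₁ : Λ.s ν₁ ∈ T := by
        rw [← hcyc₁.2.2.1]; exact hs
      obtain ⟨ν, hνr, hνd, hcyc₂⟩ := ih t q ν₁ hsig2 hg2 (by rw [hν₁r, hr]) hν₁d hsν₁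
      exact ⟨ν, hνr, hνd, isCyclinePair_trans hcyc₁ hcyc₂⟩

end Good

end KGraph
/-- For a pseudo free self-similar `k`-graph `(G, Λ)` with `g · v = v` for
all vertices `v`, and a maximal tail `T` of `Λ`: the set `H_T` is nonempty
and hereditary in `ΛT`. -/
theorem HSet_nonempty_hereditary
    {k : ℕ} (G : Type) [Group G] [Countable G] (Λ : KGraph k)
    (hRF : Λ.RowFinite) (hSF : Λ.SourceFree)
    (S : SelfSimilarSys k G Λ) (hPF : S.PseudoFree)
    (hfix : ∀ g v, Λ.IsVertex v → S.act g v = v)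
    (T : Set Λ.Path) (hT : MaximalTail Λ T) :
    (Λ.HSet T).Nonempty ∧
    (∀ v ∈ Λ.HSet T, ∀ μ, Λ.r μ = v → Λ.s μ ∈ T → Λ.s μ ∈ Λ.HSet T) := by
  classical
  constructor
  · -- Nonemptiness
    obtain ⟨v, hv, hwit⟩ := KGraph.exists_witness_vertex hT
      (KGraph.minSet_finite (Λ.PerPair (Λ.tailPaths T))) (fun g hg => hg.1)
    refine ⟨v, hv, ?_⟩
    intro p q hper μ hr hd hs
    obtain ⟨ν, hνr, hνd, hcyc⟩ := KGraph.realize hT hwit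
      (∑ i, ((p i : ℤ) - q i).natAbs) p q μ (le_refl _) hper hr hd hs
    refine ⟨ν, ⟨hνr, hνd, hcyc⟩, ?_⟩
    rintro y ⟨hyr, hyd, hycyc⟩
    exact KGraph.partner_unique hT hycyc hcyc (by rw [hyd, hνd])
  · -- Hereditariness
    rintro v ⟨hvT, hvH⟩ μ₀ hr₀ hs₀
    refine ⟨hs₀, ?_⟩
    intro p q hper μ hrμ hdμ hsμ
    have hcomp0 : Λ.s μ₀ = Λ.r μ := hrμ.symm
    have hper' : (fun i => (((Λ.d μ₀ + p) i : ℕ) : ℤ) - (((Λ.d μ₀ + q) i : ℕ) : ℤ))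
        ∈ Λ.PerPair (Λ.tailPaths T) := by
      have heq : (fun i => (((Λ.d μ₀ + p) i : ℕ) : ℤ) - (((Λ.d μ₀ + q) i : ℕ) : ℤ)) =
          fun i => (p i : ℤ) - (q i : ℤ) := by
        funext i; simp only [Pi.add_apply]; push_cast; ring
      rw [heq]; exact hper
    obtain ⟨nt, ⟨hntr, hntd, hntc⟩, -⟩ := hvH (Λ.d μ₀ + p) (Λ.d μ₀ + q) hper'
      (Λ.comp μ₀ μ) (by rw [Λ.r_comp _ _ hcomp0]; exact hr₀)
      (by rw [Λ.d_comp _ _ hcomp0, hdμ]) (by rw [Λ.s_comp _ _ hcomp0]; exact hsμ)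
    obtain ⟨⟨ν', ν⟩, ⟨hsν'ν, hdν', hdν, hcν⟩, -⟩ := Λ.factor nt (Λ.d μ₀) q hntd
    simp only at hsν'ν hdν' hdν hcν
    have hsμ'μ : Λ.s (Λ.comp μ₀ μ) = Λ.s μ := Λ.s_comp _ _ hcomp0
    have hsμ'nt : Λ.s (Λ.comp μ₀ μ) = Λ.s nt := hntc.2.2.1
    have hsν : Λ.s ν = Λ.s μ := by
      have h1 : Λ.s (Λ.comp ν' ν) = Λ.s nt := by rw [hcν]
      rw [Λ.s_comp _ _ hsν'ν] at h1
      rw [h1, ← hsμ'nt, hsμ'μ]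
    have hx₀ : (KGraph.seedPath hT hsμ).inSub (Λ.tailPaths T) :=
      KGraph.seedPath_inSub hT hsμ
    have hsntx : Λ.s nt = (KGraph.seedPath hT hsμ).val 0 0 := by
      rw [KGraph.seedPath_zero hT hsμ, ← hsμ'nt, hsμ'μ]
    set z₀ := KGraph.prependPath nt (KGraph.seedPath hT hsμ) hsntx with hz₀def
    have hz₀ : Λ.IsExtension nt (KGraph.seedPath hT hsμ) z₀ :=
      KGraph.isExtension_prependPath hsntx
    have hz₀μ' : Λ.IsExtension (Λ.comp μ₀ μ) (KGraph.seedPath hT hsμ) z₀ :=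
      hntc.2.2.2 _ hx₀ z₀ hz₀
    have hsplit1 : z₀.val 0 (Λ.d μ₀) = μ₀ ∧ z₀.val (Λ.d μ₀) (Λ.d μ) = μ := by
      have e1 := z₀.comp_val 0 (Λ.d μ₀) (Λ.d μ)
      rw [zero_add] at e1
      have hval : z₀.val 0 (Λ.d μ₀ + Λ.d μ) = Λ.comp μ₀ μ := by
        rw [show Λ.d μ₀ + Λ.d μ = Λ.d (Λ.comp μ₀ μ) from (Λ.d_comp _ _ hcomp0).symm]
        exact KGraph.ext_val_d hz₀μ'
      have c1 : Λ.s (z₀.val 0 (Λ.d μ₀)) = Λ.r (z₀.val (Λ.d μ₀) (Λ.d μ)) := by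
        rw [z₀.s_val, z₀.r_val, zero_add]
      exact KGraph.comp_factor_unique c1 hcomp0 (by rw [z₀.d_val]) (by rw [z₀.d_val])
        (by rw [e1, hval])
    have hsplit2 : z₀.val 0 (Λ.d μ₀) = ν' ∧ z₀.val (Λ.d μ₀) q = ν := by
      have e1 := z₀.comp_val 0 (Λ.d μ₀) q
      rw [zero_add] at e1
      have hval : z₀.val 0 (Λ.d μ₀ + q) = Λ.comp ν' ν := by
        have h2 : z₀.val 0 (Λ.d nt) = nt := KGraph.ext_val_d hz₀
        rw [hntd] at h2
        rw [h2]
        exact hcν.symm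
      have c1 : Λ.s (z₀.val 0 (Λ.d μ₀)) = Λ.r (z₀.val (Λ.d μ₀) q) := by
        rw [z₀.s_val, z₀.r_val, zero_add]
      exact KGraph.comp_factor_unique c1 hsν'ν (by rw [z₀.d_val, hdν'])
        (by rw [z₀.d_val, hdν]) (by rw [e1, hval])
    have hν'μ₀ : ν' = μ₀ := by rw [← hsplit2.1, hsplit1.1]
    have hμ₀ν : Λ.s μ₀ = Λ.r ν := by rw [← hν'μ₀]; exact hsν'ν
    have hrν : Λ.r ν = Λ.s μ₀ := hμ₀ν.symm
    have hpair : Λ.IsCyclinePair (Λ.tailPaths T) μ ν := by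
      refine ⟨hsμ, ?_, hsν.symm, ?_⟩
      · show Λ.s ν ∈ T
        rw [hsν]; exact hsμ
      · intro x hx z hz
        have hsμx : Λ.s μ = x.val 0 0 := by rw [← hsν]; exact hz.1
        have hsμ₀z : Λ.s μ₀ = z.val 0 0 := by rw [KGraph.ext_zero hz]; exact hμ₀ν
        have hWnt : Λ.IsExtension nt x (KGraph.prependPath μ₀ z hsμ₀z) := by
          refine ⟨by rw [← hsμ'nt, hsμ'μ]; exact hsμx, fun c => ?_⟩
          have hidx : Λ.d nt + c = Λ.d μ₀ + (q + c) := by rw [hntd, add_assoc]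
          have hcond : Λ.s ν = Λ.r (x.val 0 c) := by rw [KGraph.r_val_zero]; exact hz.1
          have hz2 : z.val 0 (q + c) = Λ.comp ν (x.val 0 c) := by
            rw [← hdν]; exact hz.2 c
          rw [hidx, KGraph.prependPath_val hsμ₀z (q + c), hz2,
            ← Λ.comp_assoc _ _ _ hμ₀ν hcond, ← hν'μ₀, hcν]
        have hWμ' := hntc.2.2.2 x hx _ hWnt
        refine ⟨hsμx, fun c => ?_⟩
        have h1 := hWμ'.2 c
        have hidx : Λ.d (Λ.comp μ₀ μ) + c = Λ.d μ₀ + (Λ.d μ + c) := by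
          rw [Λ.d_comp _ _ hcomp0, add_assoc]
        rw [hidx, KGraph.prependPath_val hsμ₀z (Λ.d μ + c)] at h1
        have hcondμx : Λ.s μ = Λ.r (x.val 0 c) := by rw [KGraph.r_val_zero]; exact hsμx
        rw [Λ.comp_assoc _ _ _ hcomp0 hcondμx] at h1
        have c1 : Λ.s μ₀ = Λ.r (z.val 0 (Λ.d μ + c)) := by
          rw [KGraph.r_val_zero]; exact hsμ₀z
        have c2 : Λ.s μ₀ = Λ.r (Λ.comp μ (x.val 0 c)) := by
          rw [Λ.r_comp _ _ hcondμx]; exact hcomp0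
        exact KGraph.comp_cancel_left c1 c2
          (by rw [z.d_val, Λ.d_comp _ _ hcondμx, x.d_val]) h1
    refine ⟨ν, ⟨hrν, hdν, hpair⟩, ?_⟩
    rintro y ⟨hyr, hyd, hycyc⟩
    exact KGraph.partner_unique hT hycyc hpair (by rw [hyd, hdν])
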